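/- Suppose Q : ℝⁿ → Matrix (Fin m) (Fin m) ℝ is a conservative Q-matrix field admitting a family of invariant distributions μ^x, uniformly exponentially ergodic, and Lipschitz in the sense that ‖Q(x) − Q(y)‖_ℓ ≤ C|x − y| for all x, y. Let b : ℝⁿ × Fin m → ℝⁿ satisfy: (i) ⟨b(x,i) − b(y,j), x − y⟩ ≤ C|x − y|² + C|x − y| whenever i ≠ j, and ⟨b(x,i) − b(y,i), x − y⟩ ≤ C|x − y|² for all i; (ii) max_i |b(x,i)| ≤ C(1 + |x|^k) for some k > 0. Then the averaged drift b̄(x) := Σⱼ b(x,j) μ^x_j satisfies the one-sided Lipschitz (monotonicity) estimate: there exists C' > 0 with ⟨b̄(x₁) − b̄(x₂), x₁ − x₂⟩ ≤ C'|x₁ − x₂|² for all x₁, x₂ ∈ ℝⁿ. -/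

import Mathlib

open MeasureTheory
open scoped RealInnerProductSpace

noncomputable section

/-- ℓ-norm of a matrix: `‖M‖_ℓ = max_i Σⱼ |M i j|`. -/
def lnorm {m : ℕ} (M : Matrix (Fin m) (Fin m) ℝ) : ℝ := ⨆ i, ∑ j, |M i j|

section Aux

open NormedSpace

variable {m : ℕ}

abbrev Mat (m : ℕ) := Matrix (Fin m) (Fin m) ℝ

private lemma summable_exp_series (M : Mat m) :
    Summable fun n : ℕ => ((n.factorial : ℝ)⁻¹) • M ^ n := by
  letI : SeminormedRing (Mat m) := Matrix.linftyOpSemiNormedRing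
  letI : NormedRing (Mat m) := Matrix.linftyOpNormedRing
  letI : NormedAlgebra ℝ (Mat m) := Matrix.linftyOpNormedAlgebra
  exact expSeries_summable' (𝕂 := ℝ) M

private lemma exp_entry (M : Mat m) (i j : Fin m) :
    exp M i j = ∑' n : ℕ, ((n.factorial : ℝ)⁻¹) * ((M ^ n) i j) := by
  have hs := summable_exp_series M
  have h1 : exp M = ∑' n : ℕ, ((n.factorial : ℝ)⁻¹) • M ^ n := by
    rw [exp_eq_tsum ℝ]
  rw [h1]
  erw [tsum_apply hs, tsum_apply (Pi.summable.mp hs i)]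
  simp [Matrix.smul_apply, smul_eq_mul]


private lemma summable_entry (M : Mat m) (i j : Fin m) :
    Summable fun n : ℕ => ((n.factorial : ℝ)⁻¹) * ((M ^ n) i j) := by
  have hs := summable_exp_series M
  have := Pi.summable.mp (Pi.summable.mp hs i) j
  simpa [Matrix.smul_apply, smul_eq_mul] using this

private lemma pow_entry_nonneg {M : Mat m} (hM : ∀ i j, 0 ≤ M i j) (n : ℕ) :
    ∀ i j, 0 ≤ (M ^ n) i j := by
  induction n with
  | zero => intro i j; by_cases h : i = j <;> simp [Matrix.one_apply, h]
  | succ n ih =>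
    intro i j
    rw [pow_succ, Matrix.mul_apply]
    exact Finset.sum_nonneg fun k _ => mul_nonneg (ih i k) (hM k j)

private lemma exp_entry_nonneg_of_nonneg {M : Mat m} (hM : ∀ i j, 0 ≤ M i j) (i j : Fin m) :
    0 ≤ exp M i j := by
  rw [exp_entry]
  exact tsum_nonneg fun n => mul_nonneg (by positivity) (pow_entry_nonneg hM n i j)

private lemma exp_smul_one (c : ℝ) :
    exp (c • (1 : Mat m)) = Real.exp c • (1 : Mat m) := by
  letI : SeminormedRing (Mat m) := Matrix.linftyOpSemiNormedRing
  letI : NormedRing (Mat m) := Matrix.linftyOpNormedRing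
  letI : NormedAlgebra ℝ (Mat m) := Matrix.linftyOpNormedAlgebra
  have h1 : c • (1 : Mat m) = algebraMap ℝ (Mat m) c := (Algebra.algebraMap_eq_smul_one c).symm
  have h2 : Real.exp c • (1 : Mat m) = algebraMap ℝ (Mat m) (Real.exp c) :=
    (Algebra.algebraMap_eq_smul_one _).symm
  rw [h1, h2, Real.exp_eq_exp_ℝ]; exact (algebraMap_exp_comm c).symm

/-- entries of `exp (t • A)` are nonneg for a matrix with nonneg off-diagonal entries. -/
private lemma exp_nonneg {A : Mat m} (hoff : ∀ i j, i ≠ j → 0 ≤ A i j) {t : ℝ} (ht : 0 ≤ t)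
    (i j : Fin m) : 0 ≤ exp (t • A) i j := by
  set a : ℝ := ∑ i, |A i i| with ha
  have haa : 0 ≤ a := Finset.sum_nonneg fun _ _ => abs_nonneg _
  have hsplit : t • A = (t • A + (t * a) • (1 : Mat m)) + (-(t * a)) • (1 : Mat m) := by
    rw [add_assoc, ← add_smul]; simp
  have hcomm : Commute (t • A + (t * a) • (1 : Mat m)) ((-(t * a)) • (1 : Mat m)) :=
    ((Commute.one_right _).smul_right _)
  have hexp : exp (t • A) =
      exp (t • A + (t * a) • (1 : Mat m)) * (Real.exp (-(t * a)) • (1 : Mat m)) := by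
    conv_lhs => rw [hsplit]
    rw [Matrix.exp_add_of_commute _ _ hcomm, exp_smul_one]
  have hB : ∀ i j, 0 ≤ (t • A + (t * a) • (1 : Mat m)) i j := by
    intro i j
    by_cases h : i = j
    · subst h
      simp only [Matrix.add_apply, Matrix.smul_apply, Matrix.one_apply_eq, smul_eq_mul, mul_one]
      have : |A i i| ≤ a := Finset.single_le_sum (f := fun k => |A k k|)
        (fun _ _ => abs_nonneg _) (Finset.mem_univ i)
      nlinarith [neg_abs_le (A i i)]
    · simp only [Matrix.add_apply, Matrix.smul_apply, Matrix.one_apply_ne h, smul_eq_mul, mul_zero,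
        add_zero]
      exact mul_nonneg ht (hoff i j h)
  rw [hexp]
  have := exp_entry_nonneg_of_nonneg hB
  rw [Matrix.mul_smul, Matrix.smul_apply]
  · refine mul_nonneg (Real.exp_nonneg _) ?_
    rw [Matrix.mul_one]
    exact this i j

private lemma pow_row_sum {A : Mat m} (hrow : ∀ i, ∑ j, A i j = 0) {n : ℕ} (hn : n ≠ 0)
    (i : Fin m) : ∑ j, (A ^ n) i j = 0 := by
  induction n with
  | zero => exact absurd rfl hn
  | succ n ih =>
    rcases Nat.eq_zero_or_pos n with h0 | hpos
    · subst h0; simpa using hrow i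
    · rw [pow_succ]
      simp only [Matrix.mul_apply]
      rw [Finset.sum_comm]
      have : ∀ k, ∑ j, (A ^ n) i k * A k j = 0 := by
        intro k; rw [← Finset.mul_sum, hrow k, mul_zero]
      simp [this]

private lemma exp_row_sum {A : Mat m} (hrow : ∀ i, ∑ j, A i j = 0) (t : ℝ) (i : Fin m) :
    ∑ j, exp (t • A) i j = 1 := by
  have hrowt : ∀ i, ∑ j, (t • A) i j = 0 := by
    intro i; simp only [Matrix.smul_apply, smul_eq_mul, ← Finset.mul_sum, hrow i, mul_zero]
  have h : ∀ j : Fin m, exp (t • A) i j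
      = ∑' n : ℕ, ((n.factorial : ℝ)⁻¹) * (((t • A) ^ n) i j) := fun j => exp_entry _ i j
  simp only [h]
  rw [← Summable.tsum_finsetSum (fun j _ => summable_entry (t • A) i j)]
  have hterm : ∀ n : ℕ, (∑ j, ((n.factorial : ℝ)⁻¹) * (((t • A) ^ n) i j))
      = if n = 0 then 1 else 0 := by
    intro n
    rcases Nat.eq_zero_or_pos n with h0 | hpos
    · subst h0; simp [Matrix.one_apply, Finset.sum_ite_eq]
    · rw [← Finset.mul_sum, pow_row_sum hrowt hpos.ne' i, mul_zero]
      simp [hpos.ne']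
  simp only [hterm]
  rw [tsum_eq_single 0 (fun n hn => by simp [hn])]
  simp


private lemma pow_inv_sum {A : Mat m} {μ : Fin m → ℝ} (hinv : ∀ j, ∑ i, μ i * A i j = 0)
    {n : ℕ} (hn : n ≠ 0) (j : Fin m) : ∑ i, μ i * (A ^ n) i j = 0 := by
  induction n with
  | zero => exact absurd rfl hn
  | succ n ih =>
    rcases Nat.eq_zero_or_pos n with h0 | hpos
    · subst h0; simpa using hinv j
    · rw [pow_succ']
      simp only [Matrix.mul_apply, Finset.mul_sum]
      rw [Finset.sum_comm]
      have : ∀ k, ∑ i, μ i * (A i k * (A ^ n) k j) = 0 := by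
        intro k
        have : ∑ i, μ i * (A i k * (A ^ n) k j) = (∑ i, μ i * A i k) * (A ^ n) k j := by
          rw [Finset.sum_mul]; congr 1; ext i; ring
        rw [this, hinv k, zero_mul]
      simp [this]

private lemma exp_inv_sum {A : Mat m} {μ : Fin m → ℝ} (hinv : ∀ j, ∑ i, μ i * A i j = 0)
    (hsum : ∑ i, μ i = 1) (t : ℝ) (j : Fin m) :
    ∑ i, μ i * exp (t • A) i j = μ j := by
  have hinvt : ∀ j, ∑ i, μ i * (t • A) i j = 0 := by
    intro j
    simp only [Matrix.smul_apply, smul_eq_mul]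
    have : ∑ i, μ i * (t * A i j) = t * ∑ i, μ i * A i j := by
      rw [Finset.mul_sum]; congr 1; ext i; ring
    rw [this, hinv j, mul_zero]
  have h : ∀ i : Fin m, exp (t • A) i j
      = ∑' n : ℕ, ((n.factorial : ℝ)⁻¹) * (((t • A) ^ n) i j) := fun i => exp_entry _ i j
  calc ∑ i, μ i * exp (t • A) i j
      = ∑ i, ∑' n : ℕ, μ i * (((n.factorial : ℝ)⁻¹) * (((t • A) ^ n) i j)) := by
        simp only [h]; congr 1; ext i; rw [← tsum_mul_left]
    _ = ∑' n : ℕ, ∑ i, μ i * (((n.factorial : ℝ)⁻¹) * (((t • A) ^ n) i j)) := by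
        rw [← Summable.tsum_finsetSum (fun i _ => Summable.mul_left _ (summable_entry (t • A) i j))]
    _ = μ j := by
        have hterm : ∀ n : ℕ, (∑ i, μ i * (((n.factorial : ℝ)⁻¹) * (((t • A) ^ n) i j)))
            = if n = 0 then μ j else 0 := by
          intro n
          rcases Nat.eq_zero_or_pos n with h0 | hpos
          · subst h0
            simp [Matrix.one_apply, mul_ite, Finset.sum_ite_eq']
          · have : ∑ i, μ i * (((n.factorial : ℝ)⁻¹) * (((t • A) ^ n) i j))
                = ((n.factorial : ℝ)⁻¹) * ∑ i, μ i * (((t • A) ^ n) i j) := by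
              rw [Finset.mul_sum]; congr 1; ext i; ring
            rw [this, pow_inv_sum hinvt hpos.ne' j, mul_zero]
            simp [hpos.ne']
        simp only [hterm]
        rw [tsum_eq_single 0 (fun n hn => by simp [hn])]
        simp


set_option maxHeartbeats 1000000 in
private lemma duhamel {A B : Mat m}
    (hAoff : ∀ i j, i ≠ j → 0 ≤ A i j) (hArow : ∀ i, ∑ j, A i j = 0)
    (hBoff : ∀ i j, i ≠ j → 0 ≤ B i j) (hBrow : ∀ i, ∑ j, B i j = 0)
    {t : ℝ} (ht : 0 ≤ t) {D : ℝ}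
    (hD : ∀ a, ∑ b, |(B - A) a b| ≤ D) (i : Fin m) :
    ∑ j, |exp (t • B) i j - exp (t • A) i j| ≤ t * D := by
  letI : SeminormedRing (Mat m) := Matrix.linftyOpSemiNormedRing
  letI : NormedRing (Mat m) := Matrix.linftyOpNormedRing
  letI : NormedAlgebra ℝ (Mat m) := Matrix.linftyOpNormedAlgebra
  set f : ℝ → Mat m := fun s => exp ((t - s) • A) * exp (s • B) with hfdef
  set g : ℝ → Mat m := fun s => exp ((t - s) • A) * ((B - A) * exp (s • B)) with hgdef
  -- derivative
  have hf : ∀ s : ℝ, HasDerivAt f (g s) s := by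
    intro s
    have hinner : HasDerivAt (fun s : ℝ => t - s) (-1) s := by
      simpa using (hasDerivAt_id s).const_sub t
    have h1 : HasDerivAt (fun u : ℝ => exp (u • A)) (A * exp ((t - s) • A)) (t - s) :=
      hasDerivAt_exp_smul_const' A (t - s)
    have h2 : HasDerivAt (fun s : ℝ => exp ((t - s) • A))
        ((-1 : ℝ) • (A * exp ((t - s) • A))) s := h1.scomp s hinner
    have h3 : HasDerivAt (fun s : ℝ => exp (s • B)) (exp (s • B) * B) s :=
      hasDerivAt_exp_smul_const B s
    have hmul := h2.mul h3
    have hRB : Commute B (exp (s • B)) := ((Commute.refl B).smul_right s).exp_right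
    have hPA : Commute A (exp ((t - s) • A)) :=
      ((Commute.refl A).smul_right (t - s)).exp_right
    have heq : (-1 : ℝ) • (A * exp ((t - s) • A)) * exp (s • B)
        + exp ((t - s) • A) * (exp (s • B) * B) = g s := by
      simp only [hgdef, neg_smul, one_smul, neg_mul]
      rw [← hRB.eq, sub_mul, mul_sub, hPA.eq]
      ring_nf
      noncomm_ring
    rw [← heq]
    exact hmul
  -- continuity of g
  have hcA : Continuous fun s : ℝ => exp ((t - s) • A) := by
    have : Continuous fun u : ℝ => exp (u • A) :=
      continuous_iff_continuousAt.mpr fun u => (hasDerivAt_exp_smul_const A u).continuousAt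
    exact this.comp (continuous_const.sub continuous_id)
  have hcB : Continuous fun s : ℝ => exp (s • B) :=
    continuous_iff_continuousAt.mpr fun u => (hasDerivAt_exp_smul_const B u).continuousAt
  have hcg : Continuous g := hcA.mul (continuous_const.mul hcB)
  -- entry evaluation CLM
  have hfin : FiniteDimensional ℝ (Mat m) := by infer_instance
  have key : ∀ j : Fin m, exp (t • B) i j - exp (t • A) i j
      = ∫ s in (0:ℝ)..t, g s i j := by
    intro j
    let eL : Mat m →ₗ[ℝ] ℝ :=
      { toFun := fun M => M i j, map_add' := fun _ _ => rfl, map_smul' := fun _ _ => rfl }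
    let eC : Mat m →L[ℝ] ℝ := LinearMap.toContinuousLinearMap eL
    have hentry : ∀ s : ℝ, HasDerivAt (fun s => f s i j) (g s i j) s := by
      intro s
      exact (eC.hasFDerivAt.comp_hasDerivAt s (hf s) : _)
    have hint : IntervalIntegrable (fun s => g s i j) MeasureTheory.volume 0 t :=
      ((eC.continuous.comp hcg).intervalIntegrable 0 t)
    have := intervalIntegral.integral_eq_sub_of_hasDerivAt (fun s _ => hentry s) hint
    rw [this]
    have hft : f t = exp (t • B) := by
      simp [hfdef, sub_self, zero_smul, exp_zero, one_mul]
    have hf0 : f 0 = exp (t • A) := by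
      simp [hfdef, sub_zero, zero_smul, exp_zero, mul_one]
    rw [hft, hf0]
  -- pointwise row bound on g
  have hDnn : 0 ≤ D := le_trans (Finset.sum_nonneg fun _ _ => abs_nonneg _) (hD i)
  have hgrow : ∀ s ∈ Set.Icc (0:ℝ) t, ∑ j, |g s i j| ≤ D := by
    intro s hs
    set P := exp ((t - s) • A) with hP
    set R := exp (s • B) with hR
    have hPnn : ∀ a b, 0 ≤ P a b := fun a b =>
      exp_nonneg hAoff (by linarith [hs.1, hs.2] : (0:ℝ) ≤ t - s) a b
    have hRnn : ∀ a b, 0 ≤ R a b := fun a b => exp_nonneg hBoff hs.1 a b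
    have hPsum : ∑ a, P i a = 1 := exp_row_sum hArow (t - s) i
    have hRsum : ∀ b, ∑ j, R b j = 1 := fun b => exp_row_sum hBrow s b
    have hentry : ∀ j, g s i j = ∑ a, ∑ c, P i a * ((B - A) a c * R c j) := by
      intro j
      show (P * ((B - A) * R)) i j = _
      simp only [Matrix.mul_apply, Finset.mul_sum]
    calc ∑ j, |g s i j| ≤ ∑ j, ∑ a, ∑ c, P i a * |(B - A) a c| * R c j := by
          refine Finset.sum_le_sum fun j _ => ?_
          rw [hentry j]
          refine le_trans (Finset.abs_sum_le_sum_abs _ _) (Finset.sum_le_sum fun a _ => ?_)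
          refine le_trans (Finset.abs_sum_le_sum_abs _ _) (Finset.sum_le_sum fun c _ => ?_)
          rw [abs_mul, abs_mul, abs_of_nonneg (hPnn i a), abs_of_nonneg (hRnn c j), mul_assoc]
      _ = ∑ a, ∑ c, P i a * |(B - A) a c| * (∑ j, R c j) := by
          rw [Finset.sum_comm]
          congr 1; ext a
          rw [Finset.sum_comm]
          congr 1; ext c
          rw [Finset.mul_sum]
      _ = ∑ a, P i a * ∑ c, |(B - A) a c| := by
          congr 1; ext a
          simp only [hRsum, mul_one, Finset.mul_sum]
      _ ≤ ∑ a, P i a * D := Finset.sum_le_sum fun a _ =>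
          mul_le_mul_of_nonneg_left (hD a) (hPnn i a)
      _ = D := by rw [← Finset.sum_mul, hPsum, one_mul]
  -- combine
  have hint2 : ∀ j : Fin m, IntervalIntegrable (fun s => g s i j) MeasureTheory.volume 0 t := by
    intro j
    have : Continuous fun s => g s i j :=
      ((continuous_apply j).comp ((continuous_apply i).comp hcg))
    exact this.intervalIntegrable 0 t
  calc ∑ j, |exp (t • B) i j - exp (t • A) i j|
      = ∑ j, |∫ s in (0:ℝ)..t, g s i j| := by simp only [key]
    _ ≤ ∑ j, ∫ s in (0:ℝ)..t, |g s i j| := by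
        refine Finset.sum_le_sum fun j _ => ?_
        exact intervalIntegral.abs_integral_le_integral_abs ht
    _ = ∫ s in (0:ℝ)..t, ∑ j, |g s i j| := by
        rw [intervalIntegral.integral_finset_sum]
        intro j _
        exact (hint2 j).abs
    _ ≤ ∫ s in (0:ℝ)..t, D := by
        have hcsum : Continuous fun s => ∑ j, |g s i j| :=
          continuous_finset_sum _ fun j _ =>
            ((continuous_apply j).comp ((continuous_apply i).comp hcg)).abs
        exact intervalIntegral.integral_mono_on ht (hcsum.intervalIntegrable 0 t)
          intervalIntegrable_const hgrow
    _ = t * D := by rw [intervalIntegral.integral_const, smul_eq_mul, sub_zero]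


private lemma max_sub_max (a b : ℝ) : max (a - b) 0 - max (b - a) 0 = a - b := by
  rcases le_total a b with h | h
  · rw [max_eq_right (by linarith : a - b ≤ 0), max_eq_left (by linarith : (0:ℝ) ≤ b - a)]; ring
  · rw [max_eq_left (by linarith : (0:ℝ) ≤ a - b), max_eq_right (by linarith : b - a ≤ 0)]; ring

private lemma max_mul_max (a b : ℝ) : max (a - b) 0 * max (b - a) 0 = 0 := by
  rcases le_total a b with h | h
  · rw [max_eq_right (by linarith : a - b ≤ 0), zero_mul]
  · rw [max_eq_right (by linarith : b - a ≤ 0), mul_zero]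

private lemma abs_eq_max_add (a b : ℝ) : |a - b| = max (a - b) 0 + max (b - a) 0 := by
  rcases le_total a b with h | h
  · rw [abs_of_nonpos (by linarith), max_eq_right (by linarith : a - b ≤ 0),
      max_eq_left (by linarith : (0:ℝ) ≤ b - a)]; ring
  · rw [abs_of_nonneg (by linarith), max_eq_left (by linarith : (0:ℝ) ≤ a - b),
      max_eq_right (by linarith : b - a ≤ 0)]; ring

private lemma coupling_bound (μ₁ μ₂ u z dp dm : Fin m → ℝ) (B1 B2 s S : ℝ)
    (hμ₁nn : ∀ j, 0 ≤ μ₁ j) (hμ₂nn : ∀ j, 0 ≤ μ₂ j)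
    (hμ₁sum : ∑ j, μ₁ j = 1) (hμ₂sum : ∑ j, μ₂ j = 1)
    (hdpnn : ∀ j, 0 ≤ dp j) (hdmnn : ∀ j, 0 ≤ dm j)
    (hsub : ∀ j, dp j - dm j = μ₁ j - μ₂ j)
    (hprodz : ∀ j, dp j * dm j = 0)
    (hdps : ∑ j, dp j = s) (hdms : ∑ j, dm j = s)
    (hsS : s ≤ S) (hSnn : 0 ≤ S) (hB2 : 0 ≤ B2)
    (hw : ∀ j l, u j - z l ≤ B1 + (if j = l then 0 else B2)) :
    ∑ j, μ₁ j * u j - ∑ l, μ₂ l * z l ≤ B1 + S * B2 := by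
  have hsnn : 0 ≤ s := hdps ▸ Finset.sum_nonneg fun j _ => hdpnn j
  rcases eq_or_lt_of_le hsnn with hs0 | hspos
  · -- total variation zero : the measures agree
    have hdp0 : ∀ j, dp j = 0 := by
      intro j
      have h := (Finset.sum_eq_zero_iff_of_nonneg (fun j _ => hdpnn j)).mp (by rw [hdps, ← hs0])
      exact h j (Finset.mem_univ j)
    have hdm0 : ∀ j, dm j = 0 := by
      intro j
      have h := (Finset.sum_eq_zero_iff_of_nonneg (fun j _ => hdmnn j)).mp (by rw [hdms, ← hs0])
      exact h j (Finset.mem_univ j)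
    have hμeq : ∀ j, μ₁ j = μ₂ j := fun j => by
      have := hsub j; rw [hdp0 j, hdm0 j] at this; linarith
    have hcalc : ∑ j, μ₁ j * u j - ∑ l, μ₂ l * z l = ∑ j, μ₂ j * (u j - z j) := by
      simp only [hμeq, mul_sub, Finset.sum_sub_distrib]
    rw [hcalc]
    calc ∑ j, μ₂ j * (u j - z j) ≤ ∑ j, μ₂ j * B1 := Finset.sum_le_sum fun j _ =>
          mul_le_mul_of_nonneg_left (by simpa using hw j j) (hμ₂nn j)
      _ = B1 := by rw [← Finset.sum_mul, hμ₂sum, one_mul]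
      _ ≤ B1 + S * B2 := le_add_of_nonneg_right (mul_nonneg hSnn hB2)
  · -- positive total variation : use the optimal coupling
    have hπnn : ∀ j l, 0 ≤ (if j = l then min (μ₁ j) (μ₂ j) else 0) + dp j * dm l / s := by
      intro j l
      refine add_nonneg ?_ (div_nonneg (mul_nonneg (hdpnn j) (hdmnn l)) hspos.le)
      split
      · exact le_min (hμ₁nn j) (hμ₂nn j)
      · exact le_rfl
    have hmin1 : ∀ j, min (μ₁ j) (μ₂ j) + dp j = μ₁ j := by
      intro j
      have h2 := hsub j; have h3 := hprodz j
      rcases le_total (μ₁ j) (μ₂ j) with h | h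
      · have hsq : dp j * dp j ≤ 0 := by nlinarith [hdpnn j, hdmnn j]
        have hdpz : dp j = 0 := by nlinarith [mul_self_nonneg (dp j)]
        rw [min_eq_left h, hdpz, add_zero]
      · have hsq : dm j * dm j ≤ 0 := by nlinarith [hdpnn j, hdmnn j]
        have hdmz : dm j = 0 := by nlinarith [mul_self_nonneg (dm j)]
        rw [min_eq_right h]
        rw [hdmz] at h2
        linarith
    have hmin2 : ∀ j, min (μ₁ j) (μ₂ j) + dm j = μ₂ j := by
      intro j
      have h1 := hmin1 j; have h2 := hsub j
      linarith
    have hrowsum : ∀ j, ∑ l, dp j * dm l / s = dp j := by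
      intro j
      rw [← Finset.sum_div, ← Finset.mul_sum, hdms, mul_div_assoc, div_self hspos.ne', mul_one]
    have hcolsum : ∀ l, ∑ j, dp j * dm l / s = dm l := by
      intro l
      rw [← Finset.sum_div, ← Finset.sum_mul, hdps, mul_comm, mul_div_assoc,
        div_self hspos.ne', mul_one]
    have hmarg1 : ∀ j, ∑ l, ((if j = l then min (μ₁ j) (μ₂ j) else 0) + dp j * dm l / s)
        = μ₁ j := by
      intro j
      rw [Finset.sum_add_distrib, Finset.sum_ite_eq]
      simp only [Finset.mem_univ, if_true]
      rw [hrowsum j, hmin1 j]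
    have hmarg2 : ∀ l, ∑ j, ((if j = l then min (μ₁ j) (μ₂ j) else 0) + dp j * dm l / s)
        = μ₂ l := by
      intro l
      rw [Finset.sum_add_distrib, Finset.sum_ite_eq']
      simp only [Finset.mem_univ, if_true]
      rw [hcolsum l, hmin2 l]
    have hid : ∑ j, μ₁ j * u j - ∑ l, μ₂ l * z l
        = ∑ j, ∑ l, ((if j = l then min (μ₁ j) (μ₂ j) else 0) + dp j * dm l / s)
            * (u j - z l) := by
      symm
      calc ∑ j, ∑ l, ((if j = l then min (μ₁ j) (μ₂ j) else 0) + dp j * dm l / s) * (u j - z l)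
          = ∑ j, ((∑ l, ((if j = l then min (μ₁ j) (μ₂ j) else 0) + dp j * dm l / s)) * u j
            - ∑ l, ((if j = l then min (μ₁ j) (μ₂ j) else 0) + dp j * dm l / s) * z l) := by
            refine Finset.sum_congr rfl fun j _ => ?_
            simp only [mul_sub]
            rw [Finset.sum_sub_distrib, Finset.sum_mul]
        _ = ∑ j, μ₁ j * u j
            - ∑ j, ∑ l, ((if j = l then min (μ₁ j) (μ₂ j) else 0) + dp j * dm l / s) * z l := by
            rw [Finset.sum_sub_distrib]
            congr 1
            exact Finset.sum_congr rfl fun j _ => by rw [hmarg1 j]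
        _ = ∑ j, μ₁ j * u j - ∑ l, μ₂ l * z l := by
            congr 1
            rw [Finset.sum_comm]
            exact Finset.sum_congr rfl fun l _ => by rw [← Finset.sum_mul, hmarg2 l]
    rw [hid]
    have hoffrow : ∀ j, ∑ l, (if j = l then 0 else dp j * dm l / s) = dp j := by
      intro j
      have hpt : ∀ l, (if j = l then 0 else dp j * dm l / s)
          = dp j * dm l / s - (if j = l then dp j * dm l / s else 0) := by
        intro l; split <;> simp
      simp only [hpt]
      rw [Finset.sum_sub_distrib, Finset.sum_ite_eq]
      simp only [Finset.mem_univ, if_true]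
      rw [hrowsum j, hprodz j, zero_div, sub_zero]
    calc ∑ j, ∑ l, ((if j = l then min (μ₁ j) (μ₂ j) else 0) + dp j * dm l / s) * (u j - z l)
        ≤ ∑ j, ∑ l, ((if j = l then min (μ₁ j) (μ₂ j) else 0) + dp j * dm l / s)
            * (B1 + (if j = l then 0 else B2)) :=
          Finset.sum_le_sum fun j _ => Finset.sum_le_sum fun l _ =>
            mul_le_mul_of_nonneg_left (hw j l) (hπnn j l)
      _ = (∑ j, ∑ l, ((if j = l then min (μ₁ j) (μ₂ j) else 0) + dp j * dm l / s)) * B1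
          + ∑ j, ∑ l, (if j = l then 0 else dp j * dm l / s) * B2 := by
          have hpt : ∀ (j l : Fin m),
              ((if j = l then min (μ₁ j) (μ₂ j) else 0) + dp j * dm l / s)
                * (B1 + (if j = l then 0 else B2))
              = ((if j = l then min (μ₁ j) (μ₂ j) else 0) + dp j * dm l / s) * B1
                + (if j = l then 0 else dp j * dm l / s) * B2 := by
            intro j l
            rcases eq_or_ne j l with rfl | h
            · simp
            · simp [h, mul_add]
          simp only [hpt, add_mul, Finset.sum_add_distrib, Finset.sum_mul]
      _ = 1 * B1 + s * B2 := by
          congr 1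
          · congr 1
            rw [← hμ₁sum]
            exact Finset.sum_congr rfl fun j _ => hmarg1 j
          · have h1 : ∑ j, ∑ l, (if j = l then 0 else dp j * dm l / s) * B2
                = ∑ j, dp j * B2 := by
              refine Finset.sum_congr rfl fun j _ => ?_
              rw [← Finset.sum_mul, hoffrow j]
            rw [h1, ← Finset.sum_mul, hdps]
      _ ≤ B1 + S * B2 := by
          have := mul_le_mul_of_nonneg_right hsS hB2
          linarith

end Aux

/-- The averaged drift `b̄(x) := Σⱼ b(x,j) μ^x_j` inherits the one-sided Lipschitz
(monotonicity) estimate `⟨b̄(x₁) − b̄(x₂), x₁ − x₂⟩ ≤ C'|x₁ − x₂|²`. -/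
theorem averaged_drift_monotone {n m : ℕ} (C₀ lam C : ℝ)
    (hC₀ : 0 < C₀) (hlam : 0 < lam) (hC : 0 < C)
    (Q : EuclideanSpace ℝ (Fin n) → Matrix (Fin m) (Fin m) ℝ)
    (μ : EuclideanSpace ℝ (Fin n) → Fin m → ℝ)
    (hQoff : ∀ x i j, i ≠ j → 0 ≤ Q x i j)
    (hQrow : ∀ x i, ∑ j, Q x i j = 0)
    (hμpos : ∀ x i, 0 < μ x i)
    (hμsum : ∀ x, ∑ i, μ x i = 1)
    (hμinv : ∀ x j, ∑ i, μ x i * Q x i j = 0)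
    (herg : ∀ x i (t : ℝ), 0 ≤ t →
      ∑ j, |NormedSpace.exp (t • Q x) i j - μ x j| ≤ C₀ * Real.exp (-lam * t))
    -- Q is Lipschitz in the ℓ-norm
    (hQlip : ∀ x y, lnorm (Q x - Q y) ≤ C * ‖x - y‖)
    (b : EuclideanSpace ℝ (Fin n) → Fin m → EuclideanSpace ℝ (Fin n))
    -- (i) one-sided Lipschitz conditions on b
    (hb₁ : ∀ x y (i j : Fin m), i ≠ j →
      ⟪b x i - b y j, x - y⟫ ≤ C * ‖x - y‖ ^ 2 + C * ‖x - y‖)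
    (hb₂ : ∀ x y (i : Fin m), ⟪b x i - b y i, x - y⟫ ≤ C * ‖x - y‖ ^ 2)
    -- (ii) polynomial growth of b
    (k : ℝ) (hk : 0 < k)
    (hb₃ : ∀ x i, ‖b x i‖ ≤ C * (1 + ‖x‖ ^ k)) :
    ∃ C' > 0, ∀ x₁ x₂ : EuclideanSpace ℝ (Fin n),
      ⟪(∑ j, μ x₁ j • b x₁ j) - ∑ j, μ x₂ j • b x₂ j, x₁ - x₂⟫
        ≤ C' * ‖x₁ - x₂‖ ^ 2 := by
  classical
  rcases Nat.eq_zero_or_pos m with hm | hm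
  · refine ⟨1, one_pos, fun x₁ x₂ => absurd (hμsum 0) ?_⟩
    subst hm
    simp
  haveI : Nonempty (Fin m) := ⟨⟨0, hm⟩⟩
  -- choose t₀ with C₀ exp(-lam t₀) ≤ 1/2
  set t₀ : ℝ := (max 0 (Real.log (2 * C₀))) / lam + 1 / lam with ht₀def
  have ht₀pos : 0 < t₀ := by
    rw [ht₀def]
    have h1 : 0 ≤ (max 0 (Real.log (2 * C₀))) / lam := div_nonneg (le_max_left _ _) hlam.le
    have h2 : 0 < 1 / lam := by positivity
    linarith
  have hhalf : C₀ * Real.exp (-lam * t₀) ≤ 1 / 2 := by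
    have hlt : -lam * t₀ ≤ -(Real.log (2 * C₀)) + -1 := by
      have : lam * t₀ = max 0 (Real.log (2 * C₀)) + 1 := by
        rw [ht₀def]; field_simp
      rw [neg_mul, this]
      have := le_max_right 0 (Real.log (2 * C₀))
      linarith
    have := Real.exp_le_exp.mpr hlt
    rw [Real.exp_add, Real.exp_neg, Real.exp_neg, Real.exp_log (by positivity : (0:ℝ) < 2 * C₀)]
      at this
    calc C₀ * Real.exp (-lam * t₀) ≤ C₀ * ((2 * C₀)⁻¹ * (Real.exp 1)⁻¹) :=
          mul_le_mul_of_nonneg_left this hC₀.le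
      _ = (Real.exp 1)⁻¹ / 2 := by field_simp
      _ ≤ 1 / 2 := by
          have h1 : (1:ℝ) ≤ Real.exp 1 := by linarith [Real.add_one_le_exp (1:ℝ)]
          have : (Real.exp 1)⁻¹ ≤ 1 := by
            rw [inv_le_one_iff₀]; right; exact h1
          linarith
  set K : ℝ := 2 * t₀ * C with hKdef
  have hKpos : 0 < K := by rw [hKdef]; positivity
  -- total variation Lipschitz bound for the invariant measures
  have hTV : ∀ x y, ∑ j, |μ x j - μ y j| ≤ K * ‖x - y‖ := by
    intro x y
    have hrowD : ∀ a, ∑ c, |(Q x - Q y) a c| ≤ C * ‖x - y‖ := fun a =>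
      le_trans (le_ciSup (Finite.bddAbove_range fun i => ∑ c, |(Q x - Q y) i c|) a) (hQlip x y)
    have hdu : ∀ i, ∑ j, |NormedSpace.exp (t₀ • Q x) i j - NormedSpace.exp (t₀ • Q y) i j|
        ≤ t₀ * (C * ‖x - y‖) := fun i =>
      duhamel (hQoff y) (hQrow y) (hQoff x) (hQrow x) ht₀pos.le hrowD i
    have hinvx : ∀ j, ∑ i, μ x i * NormedSpace.exp (t₀ • Q x) i j = μ x j :=
      exp_inv_sum (hμinv x) (hμsum x) t₀
    have hinvy : ∀ j, ∑ i, μ y i * NormedSpace.exp (t₀ • Q y) i j = μ y j :=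
      exp_inv_sum (hμinv y) (hμsum y) t₀
    have h0 : ∑ i, (μ x i - μ y i) = 0 := by
      rw [Finset.sum_sub_distrib, hμsum x, hμsum y, sub_self]
    have hsplit : ∀ j, μ x j - μ y j =
        (∑ i, μ x i * (NormedSpace.exp (t₀ • Q x) i j - NormedSpace.exp (t₀ • Q y) i j))
        + ∑ i, (μ x i - μ y i) * (NormedSpace.exp (t₀ • Q y) i j - μ y j) := by
      intro j
      have hpt : ∀ i, μ x i * (NormedSpace.exp (t₀ • Q x) i j
            - NormedSpace.exp (t₀ • Q y) i j)
          + (μ x i - μ y i) * (NormedSpace.exp (t₀ • Q y) i j - μ y j)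
          = μ x i * NormedSpace.exp (t₀ • Q x) i j
            - μ y i * NormedSpace.exp (t₀ • Q y) i j
            - (μ x i - μ y i) * μ y j := fun i => by ring
      rw [← Finset.sum_add_distrib]
      simp only [hpt]
      rw [Finset.sum_sub_distrib, Finset.sum_sub_distrib, hinvx j, hinvy j,
        ← Finset.sum_mul, h0, zero_mul, sub_zero]
    set S := ∑ j, |μ x j - μ y j| with hSdef
    have hS : S ≤ t₀ * (C * ‖x - y‖) + S * (1 / 2) := by
      have hbound : ∀ j, |μ x j - μ y j| ≤
          (∑ i, μ x i * |NormedSpace.exp (t₀ • Q x) i j - NormedSpace.exp (t₀ • Q y) i j|)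
          + ∑ i, |μ x i - μ y i| * |NormedSpace.exp (t₀ • Q y) i j - μ y j| := by
        intro j
        rw [hsplit j]
        refine le_trans (abs_add_le _ _) (add_le_add ?_ ?_)
        · refine le_trans (Finset.abs_sum_le_sum_abs _ _) (Finset.sum_le_sum fun i _ => ?_)
          rw [abs_mul, abs_of_nonneg (hμpos x i).le]
        · refine le_trans (Finset.abs_sum_le_sum_abs _ _) (Finset.sum_le_sum fun i _ => ?_)
          rw [abs_mul]
      calc S ≤ ∑ j, ((∑ i, μ x i *
            |NormedSpace.exp (t₀ • Q x) i j - NormedSpace.exp (t₀ • Q y) i j|)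
          + ∑ i, |μ x i - μ y i| * |NormedSpace.exp (t₀ • Q y) i j - μ y j|) :=
            Finset.sum_le_sum fun j _ => hbound j
        _ = (∑ i, μ x i * ∑ j,
            |NormedSpace.exp (t₀ • Q x) i j - NormedSpace.exp (t₀ • Q y) i j|)
          + ∑ i, |μ x i - μ y i| * ∑ j, |NormedSpace.exp (t₀ • Q y) i j - μ y j| := by
            rw [Finset.sum_add_distrib, Finset.sum_comm]
            congr 1
            · congr 1; ext i; rw [Finset.mul_sum]
            · rw [Finset.sum_comm]; congr 1; ext i; rw [Finset.mul_sum]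
        _ ≤ (∑ i, μ x i * (t₀ * (C * ‖x - y‖))) + ∑ i, |μ x i - μ y i| * (1 / 2) := by
            refine add_le_add (Finset.sum_le_sum fun i _ =>
              mul_le_mul_of_nonneg_left (hdu i) (hμpos x i).le)
              (Finset.sum_le_sum fun i _ => mul_le_mul_of_nonneg_left
                (le_trans (herg y i t₀ ht₀pos.le) hhalf) (abs_nonneg _))
        _ = t₀ * (C * ‖x - y‖) + S * (1 / 2) := by
            rw [← Finset.sum_mul, ← Finset.sum_mul, hμsum x, one_mul, hSdef]
    clear_value K t₀ S
    have h9 : S ≤ 2 * (t₀ * (C * ‖x - y‖)) := by linarith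
    calc S ≤ 2 * (t₀ * (C * ‖x - y‖)) := h9
      _ = K * ‖x - y‖ := by rw [hKdef]; ring
  -- final assembly via an optimal coupling of the two invariant measures
  refine ⟨C + K * C, by positivity, fun x₁ x₂ => ?_⟩
  have hw : ∀ j l : Fin m, ⟪b x₁ j, x₁ - x₂⟫ - ⟪b x₂ l, x₁ - x₂⟫
      ≤ C * ‖x₁ - x₂‖ ^ 2 + (if j = l then 0 else C * ‖x₁ - x₂‖) := by
    intro j l
    rw [← inner_sub_left]
    rcases eq_or_ne j l with rfl | hne
    · simpa using hb₂ x₁ x₂ j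
    · simpa [hne] using hb₁ x₁ x₂ j l hne
  have hdms : ∑ j, max (μ x₂ j - μ x₁ j) 0 = ∑ j, max (μ x₁ j - μ x₂ j) 0 := by
    have h1 : ∑ j, (max (μ x₁ j - μ x₂ j) 0 - max (μ x₂ j - μ x₁ j) 0) = 0 := by
      simp only [max_sub_max]
      rw [Finset.sum_sub_distrib, hμsum x₁, hμsum x₂, sub_self]
    rw [Finset.sum_sub_distrib] at h1
    linarith
  have hsS : ∑ j, max (μ x₁ j - μ x₂ j) 0 ≤ K * ‖x₁ - x₂‖ / 2 := by
    have h1 : ∑ j, |μ x₁ j - μ x₂ j|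
        = ∑ j, max (μ x₁ j - μ x₂ j) 0 + ∑ j, max (μ x₂ j - μ x₁ j) 0 := by
      rw [← Finset.sum_add_distrib]
      exact Finset.sum_congr rfl fun j _ => abs_eq_max_add _ _
    have h2 := hTV x₁ x₂
    rw [h1, hdms] at h2
    linarith
  have key := coupling_bound (μ x₁) (μ x₂)
    (fun j => ⟪b x₁ j, x₁ - x₂⟫) (fun l => ⟪b x₂ l, x₁ - x₂⟫)
    (fun j => max (μ x₁ j - μ x₂ j) 0) (fun j => max (μ x₂ j - μ x₁ j) 0)
    (C * ‖x₁ - x₂‖ ^ 2) (C * ‖x₁ - x₂‖)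
    (∑ j, max (μ x₁ j - μ x₂ j) 0) (K * ‖x₁ - x₂‖ / 2)
    (fun j => (hμpos x₁ j).le) (fun j => (hμpos x₂ j).le) (hμsum x₁) (hμsum x₂)
    (fun j => le_max_right _ _) (fun j => le_max_right _ _)
    (fun j => max_sub_max _ _) (fun j => max_mul_max _ _)
    rfl hdms hsS (by positivity) (by positivity) hw
  calc ⟪(∑ j, μ x₁ j • b x₁ j) - ∑ j, μ x₂ j • b x₂ j, x₁ - x₂⟫
      = ∑ j, μ x₁ j * ⟪b x₁ j, x₁ - x₂⟫ - ∑ l, μ x₂ l * ⟪b x₂ l, x₁ - x₂⟫ := by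
        rw [inner_sub_left, sum_inner, sum_inner]
        simp only [real_inner_smul_left]
    _ ≤ C * ‖x₁ - x₂‖ ^ 2 + K * ‖x₁ - x₂‖ / 2 * (C * ‖x₁ - x₂‖) := key
    _ ≤ (C + K * C) * ‖x₁ - x₂‖ ^ 2 := by
        nlinarith [mul_nonneg (mul_nonneg hKpos.le hC.le) (sq_nonneg ‖x₁ - x₂‖)]

end
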